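/- n-comparability is an equivalence relation on the set of submodules of M: it is reflexive and symmetric, and if N₁ is n-comparable with N₂ and N₂ is n-comparable with N₃, then N₁ is n-comparable with N₃. -/

import Mathlib

lemma my_krullDim_mono {α : Type*} [Preorder α] {s t : Set α} (h : s ⊆ t) :
    Order.krullDim s ≤ Order.krullDim t :=
  Order.krullDim_le_of_strictMono (Set.inclusion h) (fun _ _ hab => hab)

lemma my_support_stable {R : Type*} [CommRing R] {M : Type*} [AddCommGroup M] [Module R M]
    {p q : PrimeSpectrum R} (hpq : p ≤ q) (hp : p ∈ Module.support R M) :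
    q ∈ Module.support R M := by
  rw [Module.mem_support_iff_exists_annihilator] at *
  obtain ⟨m, hm⟩ := hp
  exact ⟨m, hm.trans hpq⟩

lemma my_krullDim_union_le {α : Type*} [Preorder α] {s t : Set α}
    (hs : ∀ ⦃p⦄, p ∈ s → ∀ ⦃q : α⦄, p ≤ q → q ∈ s)
    (ht : ∀ ⦃p⦄, p ∈ t → ∀ ⦃q : α⦄, p ≤ q → q ∈ t) :
    Order.krullDim ↥(s ∪ t) ≤ max (Order.krullDim s) (Order.krullDim t) := by
  refine iSup_le fun p => ?_
  have hmono : ∀ i : Fin (p.length + 1), (p 0 : α) ≤ (p i : α) := fun i =>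
    Subtype.coe_le_coe.2 (p.monotone (Fin.zero_le i))
  rcases (p 0).2 with h | h
  · refine le_max_of_le_left ?_
    exact Order.LTSeries.length_le_krullDim (⟨p.length, fun i => ⟨(p i).1, hs h (hmono i)⟩, fun i =>
        (Subtype.coe_lt_coe.2 (p.step i))⟩ : LTSeries s)
  · refine le_max_of_le_right ?_
    exact Order.LTSeries.length_le_krullDim (⟨p.length, fun i => ⟨(p i).1, ht h (hmono i)⟩, fun i =>
        (Subtype.coe_lt_coe.2 (p.step i))⟩ : LTSeries t)


/-- The Krull dimension of the support of a module, with `⊥` (i.e. `-∞`)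
for the zero module. -/
noncomputable def dimSupp (R : Type*) [CommRing R] (P : Type*) [AddCommGroup P]
    [Module R P] : WithBot (WithTop ℕ) :=
  Order.krullDim (Module.support R P)

/-- Two submodules `N₁, N₂` of `M` are `n`-comparable if the supports of both
`N₁/(N₁ ⊓ N₂)` and `N₂/(N₁ ⊓ N₂)` have Krull dimension `< n`. -/
def NComparable {R : Type*} [CommRing R] {M : Type*} [AddCommGroup M] [Module R M]
    (n : ℕ) (N₁ N₂ : Submodule R M) : Prop :=
  dimSupp R (N₁ ⧸ ((N₁ ⊓ N₂).comap N₁.subtype)) < (n : WithBot (WithTop ℕ)) ∧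
  dimSupp R (N₂ ⧸ ((N₁ ⊓ N₂).comap N₂.subtype)) < (n : WithBot (WithTop ℕ))


lemma my_support_key {R : Type*} [CommRing R] {M : Type*} [AddCommGroup M] [Module R M]
    (N₁ N₂ N₃ : Submodule R M) :
    Module.support R (N₁ ⧸ ((N₁ ⊓ N₃).comap N₁.subtype)) ⊆
      Module.support R (N₁ ⧸ ((N₁ ⊓ N₂).comap N₁.subtype)) ∪
      Module.support R (N₂ ⧸ ((N₂ ⊓ N₃).comap N₂.subtype)) := by
  intro p hp
  by_contra hc
  rw [Set.mem_union, not_or] at hc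
  obtain ⟨h1, h2⟩ := hc
  rw [Module.notMem_support_iff'] at h1 h2
  rw [Module.mem_support_iff'] at hp
  obtain ⟨m, hm⟩ := hp
  obtain ⟨x, rfl⟩ := Submodule.Quotient.mk_surjective _ m
  obtain ⟨r, hr, hrx⟩ := h1 (Submodule.Quotient.mk x)
  rw [← Submodule.Quotient.mk_smul, Submodule.Quotient.mk_eq_zero] at hrx
  rw [Submodule.mem_comap] at hrx
  have hy : ((r • x : N₁) : M) ∈ N₂ := hrx.2
  obtain ⟨s, hs, hsy⟩ := h2 (Submodule.Quotient.mk ⟨((r • x : N₁) : M), hy⟩)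
  rw [← Submodule.Quotient.mk_smul, Submodule.Quotient.mk_eq_zero] at hsy
  rw [Submodule.mem_comap] at hsy
  refine hm (s * r) (fun hmem => ((p.2.mem_or_mem hmem).elim hs hr)) ?_
  rw [← Submodule.Quotient.mk_smul, Submodule.Quotient.mk_eq_zero, Submodule.mem_comap]
  refine ⟨((s * r) • x : N₁).2, ?_⟩
  have : N₂.subtype (s • ⟨((r • x : N₁) : M), hy⟩) = N₁.subtype ((s * r) • x) := by
    simp [mul_smul]
  rw [← this]
  exact hsy.2

lemma my_bot_lt {R : Type*} [CommRing R] {P : Type*} [AddCommGroup P] [Module R P]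
    [Subsingleton P] (n : ℕ) : dimSupp R P < (n : WithBot (WithTop ℕ)) := by
  show Order.krullDim _ < _
  rw [Module.support_eq_empty (R := R) (M := P)]
  rw [Order.krullDim_eq_bot]
  exact WithBot.bot_lt_coe _

/-- `n`-comparability is an equivalence relation on the set of submodules of `M`. -/
theorem nComparable_equivalence {R : Type*} [CommRing R] {M : Type*} [AddCommGroup M]
    [Module R M] (n : ℕ) :
    Equivalence (NComparable (R := R) (M := M) n) := by
  have stable : ∀ (P : Type _) [AddCommGroup P] [Module R P],
      ∀ ⦃p⦄, p ∈ Module.support R P → ∀ ⦃q : PrimeSpectrum R⦄, p ≤ q →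
        q ∈ Module.support R P := fun P _ _ p hp q hpq => my_support_stable hpq hp
  have key : ∀ N₁ N₂ N₃ : Submodule R M,
      dimSupp R (N₁ ⧸ ((N₁ ⊓ N₂).comap N₁.subtype)) < (n : WithBot (WithTop ℕ)) →
      dimSupp R (N₂ ⧸ ((N₂ ⊓ N₃).comap N₂.subtype)) < (n : WithBot (WithTop ℕ)) →
      dimSupp R (N₁ ⧸ ((N₁ ⊓ N₃).comap N₁.subtype)) < (n : WithBot (WithTop ℕ)) := by
    intro N₁ N₂ N₃ h12 h23
    exact lt_of_le_of_lt ((my_krullDim_mono (my_support_key N₁ N₂ N₃)).trans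
      (my_krullDim_union_le (stable _) (stable _))) (max_lt h12 h23)
  constructor
  · intro N
    have h : (N ⊓ N).comap N.subtype = ⊤ := by
      rw [inf_idem]; exact Submodule.comap_subtype_self N
    have : Subsingleton (N ⧸ ((N ⊓ N).comap N.subtype)) := by
      rw [Submodule.Quotient.subsingleton_iff]; exact h
    exact ⟨my_bot_lt n, my_bot_lt n⟩
  · intro N₁ N₂ h
    refine ⟨?_, ?_⟩ <;> rw [inf_comm N₂ N₁]
    exacts [h.2, h.1]
  · intro N₁ N₂ N₃ h12 h23
    refine ⟨key N₁ N₂ N₃ h12.1 h23.1, ?_⟩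
    rw [inf_comm N₁ N₃]
    have h32 : dimSupp R (N₃ ⧸ ((N₃ ⊓ N₂).comap N₃.subtype)) < (n : WithBot (WithTop ℕ)) := by
      rw [inf_comm N₃ N₂]; exact h23.2
    have h21 : dimSupp R (N₂ ⧸ ((N₂ ⊓ N₁).comap N₂.subtype)) < (n : WithBot (WithTop ℕ)) := by
      rw [inf_comm N₂ N₁]; exact h12.2
    exact key N₃ N₂ N₁ h32 h21
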